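/- Let 0 < δ < 1 and let S be a finite subset of a group G partitioned as S = ⨆_{g∈R} B_g g with B_g ⊆ H for a subgroup H and right-coset representatives R. For each g choose B'_g ⊆ B_g with |B'_g| = ⌈(δ/(1-δ))|B_g|⌉, and let L be the set of g with 0 < |B_g| < 1/δ. If ∑_{g∈L} |B_g| ≤ δ|S|, then S' = ⨆_{g∈R} B'_g g satisfies |S'| ≤ 3δ|S|. -/

import Mathlib

open Set

private lemma aux_biUnion_le {G : Type*} (R : Finset G) (f : G → Set G) :
    (⋃ g ∈ R, f g).ncard ≤ ∑ g ∈ R, (f g).ncard := by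
  classical
  induction R using Finset.induction with
  | empty => simp
  | insert _ _ ha ih =>
    rename_i a s
    rw [Finset.sum_insert ha]
    have h1 : (⋃ g ∈ insert a s, f g) = f a ∪ ⋃ g ∈ s, f g := by simp
    rw [h1]
    exact (Set.ncard_union_le _ _).trans (add_le_add_right ih _)

private lemma aux_biUnion_eq {G : Type*} (R : Finset G) (f : G → Set G)
    (hf : ∀ g ∈ R, (f g).Finite)
    (hd : ∀ g₁ ∈ R, ∀ g₂ ∈ R, g₁ ≠ g₂ → Disjoint (f g₁) (f g₂)) :
    (⋃ g ∈ R, f g).ncard = ∑ g ∈ R, (f g).ncard := by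
  classical
  induction R using Finset.induction with
  | empty => simp
  | insert _ _ ha ih =>
    rename_i a s
    have hfin : (⋃ g ∈ s, f g).Finite :=
      Set.Finite.biUnion s.finite_toSet fun g hg => hf g (Finset.mem_insert_of_mem hg)
    have hdisj : Disjoint (f a) (⋃ g ∈ s, f g) := by
      refine Set.disjoint_iUnion₂_right.mpr fun g hg =>
        hd a (Finset.mem_insert_self a s) g (Finset.mem_insert_of_mem hg) ?_
      rintro rfl; exact ha hg
    have h1 : (⋃ g ∈ insert a s, f g) = f a ∪ ⋃ g ∈ s, f g := by simp
    rw [Finset.sum_insert ha, h1,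
      Set.ncard_union_eq hdisj (hf a (Finset.mem_insert_self a s)) hfin,
      ih (fun g hg => hf g (Finset.mem_insert_of_mem hg))
        (fun g₁ h₁ g₂ h₂ => hd g₁ (Finset.mem_insert_of_mem h₁) g₂ (Finset.mem_insert_of_mem h₂))]

/-- Let `0 < δ < 1/12` and let `S` be a finite subset of `G` partitioned as
`S = ⨆_{g∈R} B_g g` with `B_g ⊆ H`. For each `g` choose `B'_g ⊆ B_g` with
`|B'_g| = ⌈(δ/(1-δ))|B_g|⌉`, and let `L` be the set of `g ∈ R` with `0 < |B_g| < 1/δ`.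
If `∑_{g∈L} |B_g| ≤ δ|S|`, then `S' = ⨆_{g∈R} B'_g g` satisfies `|S'| ≤ 3δ|S|`. -/
theorem shaved_set_small {G : Type*} [Group G] (H : Subgroup G)
    (δ : ℝ) (hδ0 : 0 < δ) (hδ1 : δ < 1 / 12)
    (S : Set G) (hS : S.Finite) (R : Finset G) (B B' : G → Set G)
    (hBH : ∀ g ∈ R, B g ⊆ (H : Set G)) (hBfin : ∀ g ∈ R, (B g).Finite)
    (hpart : S = ⋃ g ∈ R, (fun h => h * g) '' B g)
    (hdisj : ∀ g₁ ∈ R, ∀ g₂ ∈ R, g₁ ≠ g₂ →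
      Disjoint ((fun h => h * g₁) '' B g₁) ((fun h => h * g₂) '' B g₂))
    (hB' : ∀ g ∈ R, B' g ⊆ B g)
    (hB'card : ∀ g ∈ R, ((B' g).ncard : ℝ) = ⌈δ / (1 - δ) * ((B g).ncard : ℝ)⌉₊)
    (hL : ∑ g ∈ R.filter (fun g => 0 < (B g).ncard ∧ ((B g).ncard : ℝ) < 1 / δ),
        ((B g).ncard : ℝ) ≤ δ * S.ncard) :
    ((⋃ g ∈ R, (fun h => h * g) '' B' g).ncard : ℝ) ≤ 3 * δ * S.ncard := by
  have hδ' : (0:ℝ) < 1 - δ := by linarith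
  have hinj : ∀ g : G, Function.Injective (fun h : G => h * g) :=
    fun g => mul_left_injective g
  -- |S'| ≤ ∑ |B' g|
  have h1 : ((⋃ g ∈ R, (fun h => h * g) '' B' g).ncard : ℝ) ≤
      ∑ g ∈ R, ((B' g).ncard : ℝ) := by
    have := aux_biUnion_le R (fun g => (fun h => h * g) '' B' g)
    calc ((⋃ g ∈ R, (fun h => h * g) '' B' g).ncard : ℝ)
        ≤ ((∑ g ∈ R, ((fun h => h * g) '' B' g).ncard : ℕ) : ℝ) := by exact_mod_cast this
      _ = ∑ g ∈ R, ((B' g).ncard : ℝ) := by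
          push_cast
          exact Finset.sum_congr rfl fun g _ => by
            rw [Set.ncard_image_of_injective _ (hinj g)]
  -- |S| = ∑ |B g|
  have h2 : (S.ncard : ℝ) = ∑ g ∈ R, ((B g).ncard : ℝ) := by
    rw [hpart, aux_biUnion_eq R _ (fun g hg => ((hBfin g hg).image _)) hdisj]
    push_cast
    exact Finset.sum_congr rfl fun g _ => by
      rw [Set.ncard_image_of_injective _ (hinj g)]
  -- key ceiling estimate
  have key : ∀ n : ℝ, 1 / δ ≤ n → (⌈δ / (1 - δ) * n⌉₊ : ℝ) ≤ 2 * δ * n := by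
    intro n hn
    have hn0 : 0 ≤ n := le_trans (by positivity) hn
    have h1n : 1 ≤ δ * n := by
      rw [div_le_iff₀ hδ0] at hn; linarith [hn]
    have hx0 : 0 ≤ δ / (1 - δ) * n := by positivity
    by_cases hx : δ / (1 - δ) * n ≤ 2
    · have h2' : ⌈δ / (1 - δ) * n⌉₊ ≤ 2 := Nat.ceil_le.mpr (by exact_mod_cast hx)
      have h2'' : (⌈δ / (1 - δ) * n⌉₊ : ℝ) ≤ 2 := by exact_mod_cast h2'
      linarith
    · push_neg at hx
      have hceil : (⌈δ / (1 - δ) * n⌉₊ : ℝ) < δ / (1 - δ) * n + 1 :=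
        Nat.ceil_lt_add_one hx0
      have hxe : δ * n = (δ / (1 - δ) * n) * (1 - δ) := by field_simp
      nlinarith [hceil, hx, hxe, h1n]
  -- per-term bounds
  have hnonnegB' : ∀ g ∈ R, (0:ℝ) ≤ ((B' g).ncard : ℝ) := fun g _ => by positivity
  set p : G → Prop := fun g => 0 < (B g).ncard ∧ ((B g).ncard : ℝ) < 1 / δ with hp
  classical
  have hsplit : ∑ g ∈ R, ((B' g).ncard : ℝ) =
      ∑ g ∈ R.filter p, ((B' g).ncard : ℝ) + ∑ g ∈ R.filter (fun g => ¬ p g), ((B' g).ncard : ℝ) :=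
    (Finset.sum_filter_add_sum_filter_not R p _).symm
  have hLpart : ∑ g ∈ R.filter p, ((B' g).ncard : ℝ) ≤ δ * S.ncard := by
    refine le_trans (Finset.sum_le_sum fun g hg => ?_) hL
    have hgR := Finset.mem_filter.mp hg |>.1
    exact_mod_cast Nat.cast_le.mpr (Set.ncard_le_ncard (hB' g hgR) (hBfin g hgR))
  have hbig : ∑ g ∈ R.filter (fun g => ¬ p g), ((B' g).ncard : ℝ) ≤ 2 * δ * S.ncard := by
    have step : ∑ g ∈ R.filter (fun g => ¬ p g), ((B' g).ncard : ℝ) ≤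
        ∑ g ∈ R.filter (fun g => ¬ p g), 2 * δ * ((B g).ncard : ℝ) := by
      refine Finset.sum_le_sum fun g hg => ?_
      obtain ⟨hgR, hgnp⟩ := Finset.mem_filter.mp hg
      rw [hB'card g hgR]
      rcases Nat.eq_zero_or_pos (B g).ncard with h0 | hpos
      · rw [h0]; simp
      · have : (1:ℝ) / δ ≤ ((B g).ncard : ℝ) := by
          by_contra hc
          push_neg at hc
          exact hgnp ⟨hpos, hc⟩
        exact key _ this
    calc ∑ g ∈ R.filter (fun g => ¬ p g), ((B' g).ncard : ℝ)
        ≤ ∑ g ∈ R.filter (fun g => ¬ p g), 2 * δ * ((B g).ncard : ℝ) := step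
      _ = 2 * δ * ∑ g ∈ R.filter (fun g => ¬ p g), ((B g).ncard : ℝ) := by
          rw [Finset.mul_sum]
      _ ≤ 2 * δ * ∑ g ∈ R, ((B g).ncard : ℝ) := by
          refine mul_le_mul_of_nonneg_left ?_ (by positivity)
          exact Finset.sum_le_sum_of_subset_of_nonneg (Finset.filter_subset _ _)
            (fun g _ _ => by positivity)
      _ = 2 * δ * S.ncard := by rw [h2]
  linarith [h1, hsplit ▸ add_le_add hLpart hbig]
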